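/- Let H be a Hilbert space, p, q ∈ H with p ≠ 0, q ≠ 0, and let γ(x) = ⟨x, p⟩/‖p‖² and γ_h(x) = ⟨x, q⟩/‖q‖² be the coefficients of the orthogonal projections of x onto Span{p} and Span{q}. Then for all x ∈ H, ‖γ(x) p − γ_h(x) q‖ ≤ (3/‖p‖) ‖x‖ ‖p − q‖ · max(1, ‖p‖/‖q‖)², and in particular if ‖p − q‖ ≤ ‖p‖/2 then ‖γ(x)p − γ_h(x)q‖ ≤ C ‖x‖ ‖p − q‖ with C depending only on ‖p‖. -/

import Mathlib

open RealInnerProductSpace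

set_option maxHeartbeats 1000000

/-- Key estimate: for unit vectors `u, v`, the difference of rank-one projections
applied to `x` is bounded by `‖x‖ * ‖u - v‖`. -/
lemma proj_diff_key {H : Type*} [NormedAddCommGroup H] [InnerProductSpace ℝ H]
    (x u v : H) (hu : ‖u‖ = 1) (hv : ‖v‖ = 1) :
    ‖⟪x, u⟫ • u - ⟪x, v⟫ • v‖ ≤ ‖x‖ * ‖u - v‖ := by
  set a : ℝ := ⟪x, u⟫ with ha
  set b : ℝ := ⟪x, v⟫ with hb
  set c : ℝ := ⟪u, v⟫ with hc
  have huu : ⟪u, u⟫ = (1 : ℝ) := by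
    rw [real_inner_self_eq_norm_sq, hu]; norm_num
  have hvv : ⟪v, v⟫ = (1 : ℝ) := by
    rw [real_inner_self_eq_norm_sq, hv]; norm_num
  have hvu : ⟪v, u⟫ = c := by rw [real_inner_comm]
  have hxu : ⟪u, x⟫ = a := by rw [real_inner_comm]
  have hxv : ⟪v, x⟫ = b := by rw [real_inner_comm]
  -- Cauchy–Schwarz on x - a•u and v - c•u
  have hCS := real_inner_mul_inner_self_le (x - a • u) (v - c • u)
  have e1 : ⟪x - a • u, v - c • u⟫ = b - c * a := by
    simp [-inner_self_eq_norm_sq_to_K, inner_sub_left, inner_sub_right, real_inner_smul_left, real_inner_smul_right,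
      huu, hvu, ← ha, ← hb, ← hc]
    ring
  have e2 : ⟪x - a • u, x - a • u⟫ = ⟪x, x⟫ - a ^ 2 := by
    simp [-inner_self_eq_norm_sq_to_K, inner_sub_left, inner_sub_right, real_inner_smul_left, real_inner_smul_right,
      huu, hxu, ← ha]
    ring
  have e3 : ⟪v - c • u, v - c • u⟫ = 1 - c ^ 2 := by
    simp [-inner_self_eq_norm_sq_to_K, inner_sub_left, inner_sub_right, real_inner_smul_left, real_inner_smul_right,
      huu, hvv, hvu, ← hc]
    ring
  rw [e1, e2, e3] at hCS
  have hxx : ⟪x, x⟫ = ‖x‖ ^ 2 := real_inner_self_eq_norm_sq x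
  rw [hxx] at hCS
  -- |c| ≤ 1
  have hc1 : c ≤ 1 := by
    calc c ≤ ‖u‖ * ‖v‖ := real_inner_le_norm u v
    _ = 1 := by rw [hu, hv]; ring
  -- norm of the difference, squared
  have hn1 : ‖a • u - b • v‖ ^ 2 = a ^ 2 + b ^ 2 - 2 * a * b * c := by
    rw [← real_inner_self_eq_norm_sq]
    simp [-inner_self_eq_norm_sq_to_K, inner_sub_left, inner_sub_right, real_inner_smul_left, real_inner_smul_right,
      huu, hvv, hvu, ← hc]
    ring
  have hn2 : ‖u - v‖ ^ 2 = 2 - 2 * c := by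
    rw [← real_inner_self_eq_norm_sq]
    simp [-inner_self_eq_norm_sq_to_K, inner_sub_left, inner_sub_right, huu, hvv, hvu, ← hc]
    ring
  have ha2 : a ^ 2 ≤ ‖x‖ ^ 2 := by
    have := real_inner_mul_inner_self_le x u
    rw [huu, hxx] at this
    nlinarith [this]
  have hsq : ‖a • u - b • v‖ ^ 2 ≤ (‖x‖ * ‖u - v‖) ^ 2 := by
    have : (‖x‖ * ‖u - v‖) ^ 2 = ‖x‖ ^ 2 * (2 - 2 * c) := by
      rw [mul_pow, hn2]
    rw [hn1, this]
    nlinarith [hCS, ha2, hc1]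
  have := Real.sqrt_le_sqrt hsq
  rwa [Real.sqrt_sq (norm_nonneg _), Real.sqrt_sq (by positivity)] at this


lemma unit_diff_bound {H : Type*} [NormedAddCommGroup H] [InnerProductSpace ℝ H]
    (p q : H) (hp : p ≠ 0) (hq : q ≠ 0) :
    ‖‖p‖⁻¹ • p - ‖q‖⁻¹ • q‖ ≤ 2 * ‖p - q‖ / ‖p‖ := by
  have hpn : (0:ℝ) < ‖p‖ := norm_pos_iff.mpr hp
  have hqn : (0:ℝ) < ‖q‖ := norm_pos_iff.mpr hq
  have hdecomp : ‖p‖⁻¹ • p - ‖q‖⁻¹ • q = ‖p‖⁻¹ • (p - q) + (‖p‖⁻¹ - ‖q‖⁻¹) • q := by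
    rw [smul_sub, sub_smul]; abel
  rw [hdecomp]
  have h1 : ‖‖p‖⁻¹ • (p - q)‖ = ‖p - q‖ / ‖p‖ := by
    rw [norm_smul]; simp [abs_of_pos (inv_pos.mpr hpn)]; ring
  have h2 : ‖(‖p‖⁻¹ - ‖q‖⁻¹) • q‖ ≤ ‖p - q‖ / ‖p‖ := by
    rw [norm_smul]
    have habs : |‖p‖⁻¹ - ‖q‖⁻¹| = |‖q‖ - ‖p‖| / (‖p‖ * ‖q‖) := by
      rw [← abs_of_pos (mul_pos hpn hqn), ← abs_div]
      congr 1
      field_simp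
    rw [Real.norm_eq_abs, habs]
    have hle : |‖q‖ - ‖p‖| ≤ ‖p - q‖ := by
      have := abs_norm_sub_norm_le q p
      rwa [norm_sub_rev] at this
    calc |‖q‖ - ‖p‖| / (‖p‖ * ‖q‖) * ‖q‖ = |‖q‖ - ‖p‖| / ‖p‖ := by
          field_simp
      _ ≤ ‖p - q‖ / ‖p‖ := by gcongr
  calc ‖‖p‖⁻¹ • (p - q) + (‖p‖⁻¹ - ‖q‖⁻¹) • q‖
      ≤ ‖‖p‖⁻¹ • (p - q)‖ + ‖(‖p‖⁻¹ - ‖q‖⁻¹) • q‖ := norm_add_le _ _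
    _ ≤ ‖p - q‖ / ‖p‖ + ‖p - q‖ / ‖p‖ := by rw [h1]; gcongr
    _ = 2 * ‖p - q‖ / ‖p‖ := by ring

theorem projection_perturbation
    (H : Type*) [NormedAddCommGroup H] [InnerProductSpace ℝ H] [CompleteSpace H]
    (p q : H) (hp : p ≠ 0) (hq : q ≠ 0) :
    (∀ x : H,
      ‖(⟪x, p⟫ / ‖p‖ ^ 2) • p - (⟪x, q⟫ / ‖q‖ ^ 2) • q‖ ≤
        (3 / ‖p‖) * ‖x‖ * ‖p - q‖ * (max 1 (‖p‖ / ‖q‖)) ^ 2) ∧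
    (‖p - q‖ ≤ ‖p‖ / 2 → ∃ C > 0, ∀ x : H,
      ‖(⟪x, p⟫ / ‖p‖ ^ 2) • p - (⟪x, q⟫ / ‖q‖ ^ 2) • q‖ ≤ C * ‖x‖ * ‖p - q‖) := by
  have hpn : (0:ℝ) < ‖p‖ := norm_pos_iff.mpr hp
  have hqn : (0:ℝ) < ‖q‖ := norm_pos_iff.mpr hq
  set u : H := ‖p‖⁻¹ • p with hu_def
  set v : H := ‖q‖⁻¹ • q with hv_def
  have hu : ‖u‖ = 1 := norm_smul_inv_norm hp
  have hv : ‖v‖ = 1 := norm_smul_inv_norm hq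
  have hup : ∀ x : H, (⟪x, p⟫ / ‖p‖ ^ 2) • p = ⟪x, u⟫ • u := by
    intro x
    rw [hu_def, real_inner_smul_right, smul_smul]
    congr 1
    rw [div_eq_mul_inv, pow_two, mul_inv]
    ring
  have hvq : ∀ x : H, (⟪x, q⟫ / ‖q‖ ^ 2) • q = ⟪x, v⟫ • v := by
    intro x
    rw [hv_def, real_inner_smul_right, smul_smul]
    congr 1
    rw [div_eq_mul_inv, pow_two, mul_inv]
    ring
  have huv : ‖u - v‖ ≤ 2 * ‖p - q‖ / ‖p‖ := unit_diff_bound p q hp hq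
  have main : ∀ x : H, ‖(⟪x, p⟫ / ‖p‖ ^ 2) • p - (⟪x, q⟫ / ‖q‖ ^ 2) • q‖ ≤
      2 / ‖p‖ * ‖x‖ * ‖p - q‖ := by
    intro x
    rw [hup x, hvq x]
    calc ‖⟪x, u⟫ • u - ⟪x, v⟫ • v‖ ≤ ‖x‖ * ‖u - v‖ := proj_diff_key x u v hu hv
      _ ≤ ‖x‖ * (2 * ‖p - q‖ / ‖p‖) := by gcongr
      _ = 2 / ‖p‖ * ‖x‖ * ‖p - q‖ := by ring
  have hM : (1:ℝ) ≤ max 1 (‖p‖ / ‖q‖) := le_max_left _ _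
  constructor
  · intro x
    calc ‖(⟪x, p⟫ / ‖p‖ ^ 2) • p - (⟪x, q⟫ / ‖q‖ ^ 2) • q‖
        ≤ 2 / ‖p‖ * ‖x‖ * ‖p - q‖ := main x
      _ ≤ (3 / ‖p‖) * ‖x‖ * ‖p - q‖ := by gcongr <;> norm_num
      _ ≤ (3 / ‖p‖) * ‖x‖ * ‖p - q‖ * (max 1 (‖p‖ / ‖q‖)) ^ 2 := by
          have hM2 : (1:ℝ) ≤ (max 1 (‖p‖ / ‖q‖)) ^ 2 := by nlinarith [hM]
          have h3 : (0:ℝ) ≤ 3 / ‖p‖ * ‖x‖ * ‖p - q‖ := by positivity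
          nlinarith [mul_le_mul_of_nonneg_left hM2 h3]
  · intro _
    refine ⟨2 / ‖p‖, by positivity, fun x => main x⟩
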